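/- Fix an integer N ≥ 2 and reals β > 0, t > 0. Define Z(a) = ∫_{(−∞,a]^{N−1}} ∏_{i=1}^{N−1} exp(−Nβλ_i²/(4t)) (a−λ_i)^β · ∏_{1≤i<j≤N−1} |λ_i−λ_j|^β dλ. Then a ↦ ln Z(a) is differentiable on ℝ, with d/da ln Z(a) = β · E_a[Σ_{i=1}^{N−1} 1/(a−λ_i)], where E_a denotes expectation with respect to the probability measure on (−∞,a]^{N−1} whose density is proportional to the integrand of Z(a). -/

import Mathlib

open MeasureTheory Filter

/-- Integrand of the constrained partition function: the β-ensemble weight of `N - 1`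
eigenvalues with Gaussian weight `exp(-Nβλ²/(4t))` and hard-wall factor `(a - λᵢ)^β`. -/
noncomputable def wallWeight (N : ℕ) (β t a : ℝ) (l : Fin (N - 1) → ℝ) : ℝ :=
  (∏ i, Real.exp (-(N * β * (l i) ^ 2) / (4 * t)) * (a - l i) ^ β) *
    ∏ i, ∏ j ∈ Finset.Ioi i, |l i - l j| ^ β

/-- `Z(a) = ∫_{(-∞,a]^{N-1}} wallWeight`. -/
noncomputable def wallZ (N : ℕ) (β t : ℝ) (a : ℝ) : ℝ :=
  ∫ l in {l : Fin (N - 1) → ℝ | ∀ i, l i ≤ a}, wallWeight N β t a l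

/-- The probability measure on `(-∞,a]^{N-1}` with density proportional to the
integrand of `Z(a)`. -/
noncomputable def wallMeasure (N : ℕ) (β t : ℝ) (a : ℝ) : Measure (Fin (N - 1) → ℝ) :=
  (volume.restrict {l | ∀ i, l i ≤ a}).withDensity fun l =>
    ENNReal.ofReal (wallWeight N β t a l / wallZ N β t a)

open Set

namespace WallAux

noncomputable def phi (r x : ℝ) : ℝ := max x 0 ^ r

noncomputable def vdm (β : ℝ) {n : ℕ} (l : Fin n → ℝ) : ℝ :=
  ∏ i, ∏ j ∈ Finset.Ioi i, |l i - l j| ^ β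

noncomputable def FF (c β s : ℝ) {n : ℕ} (l : Fin n → ℝ) : ℝ :=
  (∏ i, Real.exp (-(c * l i ^ 2)) * phi β (s - l i)) * vdm β l

noncomputable def GG (c β s : ℝ) {n : ℕ} (l : Fin n → ℝ) : ℝ :=
  (∑ i, β * (s - l i)⁻¹) * FF c β s l

noncomputable def bnd1 (c K s r x : ℝ) : ℝ :=
  phi r (s - x) * Real.exp (-(c * x ^ 2) + K * |x|)

variable {n : ℕ} {c β c' K r : ℝ}

lemma measurable_rpow_const (r : ℝ) : Measurable fun x : ℝ => x ^ r :=
  measurable_of_continuousOn_compl_singleton 0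
    (fun x hx => (Real.continuousAt_rpow_const x r
      (Or.inl (Set.mem_compl_singleton_iff.mp hx))).continuousWithinAt)

lemma phi_nonneg (r x : ℝ) : 0 ≤ phi r x := Real.rpow_nonneg (le_max_right _ _) _

lemma phi_measurable (r : ℝ) : Measurable (phi r) :=
  (measurable_rpow_const r).comp (measurable_id.max measurable_const)

lemma phi_continuous (hβ : 0 < β) : Continuous (phi β) := by
  have h : Continuous fun x : ℝ => x ^ β := by
    rw [continuous_iff_continuousAt]
    exact fun x => Real.continuousAt_rpow_const x β (Or.inr hβ.le)
  exact h.comp (continuous_id.max continuous_const)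

lemma phi_eq_zero (hβ : 0 < β) {x : ℝ} (hx : x ≤ 0) : phi β x = 0 := by
  simp [phi, max_eq_right hx, Real.zero_rpow hβ.ne']

lemma phi_eq_rpow {x : ℝ} (hx : 0 ≤ x) : phi r x = x ^ r := by
  simp [phi, max_eq_left hx]

lemma phi_mono (hβ : 0 < β) {x y : ℝ} (hxy : x ≤ y) : phi β x ≤ phi β y :=
  Real.rpow_le_rpow (le_max_right _ _) (max_le_max hxy le_rfl) hβ.le

lemma one_le_phi (hβ : 0 < β) {x : ℝ} (hx : 1 ≤ x) : 1 ≤ phi β x := by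
  simpa [phi] using Real.one_le_rpow (le_trans hx (le_max_left x 0)) hβ.le

lemma phi_le_one_of_nonpos {x : ℝ} (hx : x ≤ 0) : phi r x ≤ 1 := by
  rw [phi, max_eq_right hx]
  rcases eq_or_ne r 0 with rfl | hr
  · simp
  · simp [Real.zero_rpow hr]

lemma abs_phi_le (r x : ℝ) : |phi r x| ≤ |x ^ r| := by
  rcases lt_trichotomy x 0 with h | h | h
  · rw [phi, max_eq_right h.le]
    rcases eq_or_ne r 0 with rfl | hr
    · simp
    · simp [Real.zero_rpow hr, abs_nonneg]
  · subst h; simp [phi]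
  · rw [phi, max_eq_left h.le]

lemma inv_phi_le (hβ : 0 < β) (x : ℝ) : |x⁻¹| * phi β x ≤ phi (β - 1) x := by
  rcases lt_or_ge 0 x with h | h
  · rw [phi_eq_rpow h.le, phi_eq_rpow h.le, Real.rpow_sub_one h.ne' β,
      abs_of_pos (inv_pos.mpr h)]
    rw [div_eq_mul_inv, mul_comm]
  · rw [phi_eq_zero hβ h, mul_zero]
    exact phi_nonneg _ _

lemma vdm_nonneg (β : ℝ) (l : Fin n → ℝ) : 0 ≤ vdm β l :=
  Finset.prod_nonneg fun i _ => Finset.prod_nonneg fun j _ =>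
    Real.rpow_nonneg (abs_nonneg _) _

lemma vdm_continuous (hβ : 0 < β) : Continuous (vdm β (n := n)) := by
  have h : Continuous fun x : ℝ => x ^ β := by
    rw [continuous_iff_continuousAt]
    exact fun x => Real.continuousAt_rpow_const x β (Or.inr hβ.le)
  refine continuous_finset_prod _ fun i _ => continuous_finset_prod _ fun j _ => ?_
  exact h.comp (((continuous_apply i).sub (continuous_apply j)).abs)

lemma FF_nonneg (hβ : 0 < β) (s : ℝ) (l : Fin n → ℝ) : 0 ≤ FF c β s l :=
  mul_nonneg (Finset.prod_nonneg fun i _ =>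
    mul_nonneg (Real.exp_pos _).le (phi_nonneg _ _)) (vdm_nonneg β l)

lemma FF_continuous (hβ : 0 < β) (s : ℝ) : Continuous (FF c β s (n := n)) := by
  refine Continuous.mul (continuous_finset_prod _ fun i _ => ?_) (vdm_continuous hβ)
  exact (Real.continuous_exp.comp (by fun_prop)).mul
    ((phi_continuous hβ).comp (continuous_const.sub (continuous_apply i)))

lemma FF_measurable (hβ : 0 < β) (s : ℝ) : Measurable (FF c β s (n := n)) :=
  (FF_continuous hβ s).measurable

lemma GG_measurable (hβ : 0 < β) (s : ℝ) : Measurable (GG c β s (n := n)) := by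
  exact Measurable.mul (Finset.measurable_sum _ fun i _ =>
    (by fun_prop)) (FF_measurable hβ s)

lemma GG_nonneg (hβ : 0 < β) (s : ℝ) (l : Fin n → ℝ) : 0 ≤ GG c β s l := by
  by_cases h : ∀ i, 0 < s - l i
  · refine mul_nonneg (Finset.sum_nonneg fun i _ => ?_) (FF_nonneg hβ s l)
    exact mul_nonneg hβ.le (inv_nonneg.mpr (h i).le)
  · push_neg at h
    obtain ⟨i, hi⟩ := h
    have : FF c β s l = 0 := by
      rw [FF, Finset.prod_eq_zero (Finset.mem_univ i) (by rw [phi_eq_zero hβ hi, mul_zero]),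
        zero_mul]
    rw [GG, this, mul_zero]

lemma FF_mono (hβ : 0 < β) {s₀ s₁ : ℝ} (h : s₀ ≤ s₁) (l : Fin n → ℝ) :
    FF c β s₀ l ≤ FF c β s₁ l := by
  refine mul_le_mul_of_nonneg_right (Finset.prod_le_prod (fun i _ =>
    mul_nonneg (Real.exp_pos _).le (phi_nonneg _ _)) fun i _ => ?_) (vdm_nonneg β l)
  exact mul_le_mul_of_nonneg_left (phi_mono hβ (by linarith)) (Real.exp_pos _).le

lemma vdm_le (hβ : 0 < β) (l : Fin n → ℝ) :
    vdm β l ≤ ∏ i, Real.exp ((n ^ 2 * β) * |l i|) := by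
  set S := ∑ k, |l k| with hSdef
  have hS : 0 ≤ S := Finset.sum_nonneg fun k _ => abs_nonneg _
  have h1 : ∀ i j : Fin n, i ≠ j → |l i - l j| ^ β ≤ Real.exp (β * S) := by
    intro i j hij
    have hij2 : |l i - l j| ≤ S := by
      calc |l i - l j| ≤ |l i| + |l j| := abs_sub _ _
        _ = ∑ k ∈ ({i, j} : Finset _), |l k| := by rw [Finset.sum_pair hij]
        _ ≤ S := Finset.sum_le_sum_of_subset_of_nonneg (Finset.subset_univ _)
            (fun k _ _ => abs_nonneg _)
    have h3 : |l i - l j| ≤ Real.exp S :=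
      hij2.trans (by linarith [Real.add_one_le_exp S])
    calc |l i - l j| ^ β ≤ Real.exp S ^ β :=
          Real.rpow_le_rpow (abs_nonneg _) h3 hβ.le
      _ = Real.exp (S * β) := (Real.exp_mul S β).symm
      _ = Real.exp (β * S) := by rw [mul_comm]
  have h2 : vdm β l ≤ Real.exp (β * S) ^ (∑ i : Fin n, (Finset.Ioi i).card) := by
    rw [← Finset.prod_pow_eq_pow_sum]
    refine Finset.prod_le_prod (fun i _ => Finset.prod_nonneg fun j _ =>
      Real.rpow_nonneg (abs_nonneg _) _) (fun i _ => ?_)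
    rw [← Finset.prod_const]
    exact Finset.prod_le_prod (fun j _ => Real.rpow_nonneg (abs_nonneg _) _)
      (fun j hj => h1 i j (Finset.mem_Ioi.mp hj).ne)
  have hcard : (∑ i : Fin n, (Finset.Ioi i).card) ≤ n ^ 2 := by
    calc (∑ i : Fin n, (Finset.Ioi i).card) ≤ ∑ _i : Fin n, n :=
          Finset.sum_le_sum fun i _ => by
            simpa using (Finset.card_le_card (Finset.subset_univ (Finset.Ioi i))).trans
              (le_of_eq (by simp))
      _ = n ^ 2 := by simp [sq]
  calc vdm β l ≤ Real.exp (β * S) ^ (∑ i : Fin n, (Finset.Ioi i).card) := h2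
    _ ≤ Real.exp (β * S) ^ (n ^ 2) := by
        exact pow_le_pow_right₀ (Real.one_le_exp (by positivity)) hcard
    _ = Real.exp ((n ^ 2 : ℝ) * (β * S)) := by rw [← Real.exp_nat_mul]; norm_num
    _ = ∏ i, Real.exp ((n ^ 2 * β) * |l i|) := by
        rw [← Real.exp_sum]
        congr 1
        rw [hSdef, Finset.mul_sum, Finset.mul_sum]
        apply Finset.sum_congr rfl
        intro i _
        ring

lemma integrable_gauss_abs (hc' : 0 < c') (K : ℝ) :
    Integrable (fun x : ℝ => Real.exp (-(c' * x ^ 2) + K * |x|)) := by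
  have h0 : Integrable (fun x : ℝ => Real.exp (-(c' / 2) * x ^ 2)) :=
    integrable_exp_neg_mul_sq (by linarith)
  refine ((h0.const_mul (Real.exp (K ^ 2 / (2 * c')))).mono'
    ((Real.continuous_exp.comp (by fun_prop)).aestronglyMeasurable) ?_)
  filter_upwards with x
  rw [Real.norm_eq_abs, abs_of_pos (Real.exp_pos _), ← Real.exp_add]
  apply Real.exp_le_exp.mpr
  have h4 : (0:ℝ) < 2 * c' := by linarith
  have key : K * |x| ≤ c' / 2 * x ^ 2 + K ^ 2 / (2 * c') := by
    have h5 : 2 * c' * (K * |x|) ≤ 2 * c' * (c' / 2 * x ^ 2 + K ^ 2 / (2 * c')) := by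
      have he : 2 * c' * (c' / 2 * x ^ 2 + K ^ 2 / (2 * c')) = c' ^ 2 * x ^ 2 + K ^ 2 := by
        field_simp
      rw [he]; nlinarith [sq_nonneg (c' * |x| - K), sq_abs x]
    exact le_of_mul_le_mul_left h5 h4
  linarith

lemma intervalIntegrable_phi_comp (hr : -1 < r) (d a b : ℝ) :
    IntervalIntegrable (fun x => phi r (x - d)) volume a b := by
  have h2 : IntervalIntegrable (fun x : ℝ => (x - d) ^ r) volume a b := by
    simpa using (intervalIntegral.intervalIntegrable_rpow' hr (a := a - d) (b := b - d)).comp_sub_right d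
  refine h2.mono_fun
    ((phi_measurable r).comp (measurable_id.sub measurable_const)).aestronglyMeasurable ?_
  filter_upwards with x
  simpa [Real.norm_eq_abs] using abs_phi_le r (x - d)

lemma intervalIntegrable_phi_comp' (hr : -1 < r) (d a b : ℝ) :
    IntervalIntegrable (fun x => phi r (d - x)) volume a b := by
  have h2 : IntervalIntegrable (fun x : ℝ => (d - x) ^ r) volume a b := by
    simpa using (intervalIntegral.intervalIntegrable_rpow' hr (a := d - a) (b := d - b)).comp_sub_left d
  refine h2.mono_fun
    ((phi_measurable r).comp (measurable_const.sub measurable_id)).aestronglyMeasurable ?_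
  filter_upwards with x
  simpa [Real.norm_eq_abs] using abs_phi_le r (d - x)

lemma integrable_phi_gauss (hc' : 0 < c') (hr : -1 < r) (hK : 0 ≤ K) (s : ℝ) :
    Integrable (bnd1 c' K s r) := by
  set g := (Icc (s - 1) (s + 1)).indicator
    (fun x => Real.exp (K * (|s| + 1)) * phi r (s - x)) with hgdef
  set h := fun x : ℝ => Real.exp (|r| * (|s| + |x|)) * Real.exp (-(c' * x ^ 2) + K * |x|)
    with hhdef
  have hgi : Integrable g := by
    refine IntegrableOn.integrable_indicator ?_ measurableSet_Icc
    exact ((intervalIntegrable_iff_integrableOn_Icc_of_le (by linarith)).mp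
      ((intervalIntegrable_phi_comp' hr s (s - 1) (s + 1)).const_mul _))
  have hhi : Integrable h := by
    have he : h = fun x => Real.exp (|r| * |s|) *
        Real.exp (-(c' * x ^ 2) + (K + |r|) * |x|) := by
      funext x
      show Real.exp (|r| * (|s| + |x|)) * Real.exp (-(c' * x ^ 2) + K * |x|) = _
      rw [← Real.exp_add, ← Real.exp_add]
      ring_nf
    rw [he]; exact (integrable_gauss_abs hc' _).const_mul _
  refine (hgi.add hhi).mono' ?_ ?_
  · exact (((phi_measurable r).comp (measurable_const.sub measurable_id)).mul
      (Real.continuous_exp.comp (by fun_prop)).measurable).aestronglyMeasurable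
  filter_upwards with x
  have hfnn : (0:ℝ) ≤ phi r (s - x) * Real.exp (-(c' * x ^ 2) + K * |x|) :=
    mul_nonneg (phi_nonneg _ _) (Real.exp_pos _).le
  rw [bnd1, Real.norm_eq_abs, abs_of_nonneg hfnn]
  by_cases hx : x ∈ Icc (s - 1) (s + 1)
  · have hgx : g x = Real.exp (K * (|s| + 1)) * phi r (s - x) := indicator_of_mem hx _
    have hb : Real.exp (-(c' * x ^ 2) + K * |x|) ≤ Real.exp (K * (|s| + 1)) := by
      apply Real.exp_le_exp.mpr
      have h1 : |x| ≤ |s| + 1 := by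
        rcases hx with ⟨hx1, hx2⟩
        rw [abs_le]
        constructor
        · linarith [neg_abs_le s]
        · linarith [le_abs_self s]
      nlinarith [sq_nonneg x, mul_le_mul_of_nonneg_left h1 hK]
    have : phi r (s - x) * Real.exp (-(c' * x ^ 2) + K * |x|) ≤ g x := by
      rw [hgx, mul_comm]
      exact mul_le_mul_of_nonneg_right hb (phi_nonneg _ _)
    have hh0 : 0 ≤ h x := mul_nonneg (Real.exp_pos _).le (Real.exp_pos _).le
    simp only [Pi.add_apply]
    linarith
  · have hgx : g x = 0 := indicator_of_notMem hx _
    have hphix : phi r (s - x) ≤ Real.exp (|r| * (|s| + |x|)) := by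
      rcases not_and_or.mp hx with hx1 | hx1 <;> push_neg at hx1
      · -- x < s - 1, so 1 < s - x
        have h1 : (1:ℝ) < s - x := by linarith
        rw [phi_eq_rpow (by linarith)]
        calc (s - x) ^ r ≤ (s - x) ^ |r| :=
              Real.rpow_le_rpow_of_exponent_le h1.le (le_abs_self r)
          _ ≤ Real.exp (|s| + |x|) ^ |r| := by
              refine Real.rpow_le_rpow (by linarith) ?_ (abs_nonneg r)
              have h2 : s - x ≤ |s| + |x| := by
                calc s - x ≤ |s - x| := le_abs_self _
                  _ ≤ |s| + |x| := abs_sub _ _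
              linarith [Real.add_one_le_exp (|s| + |x|)]
          _ = Real.exp ((|s| + |x|) * |r|) := (Real.exp_mul _ _).symm
          _ = Real.exp (|r| * (|s| + |x|)) := by rw [mul_comm]
      · -- s + 1 < x, so s - x < 0
        have h1 : s - x ≤ 0 := by linarith
        calc phi r (s - x) ≤ 1 := phi_le_one_of_nonpos h1
          _ ≤ Real.exp (|r| * (|s| + |x|)) := Real.one_le_exp (by positivity)
    have : phi r (s - x) * Real.exp (-(c' * x ^ 2) + K * |x|) ≤ h x :=
      mul_le_mul_of_nonneg_right hphix (Real.exp_pos _).le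
    simp only [Pi.add_apply]
    linarith [hgx, this]

lemma FF_le (hβ : 0 < β) (s : ℝ) (l : Fin n → ℝ) :
    FF c β s l ≤ ∏ i, bnd1 c (n ^ 2 * β) s β (l i) := by
  have h1 : FF c β s l ≤ (∏ i, Real.exp (-(c * l i ^ 2)) * phi β (s - l i)) *
      ∏ i, Real.exp ((n ^ 2 * β) * |l i|) := by
    refine mul_le_mul_of_nonneg_left (vdm_le hβ l) ?_
    exact Finset.prod_nonneg fun i _ => mul_nonneg (Real.exp_pos _).le (phi_nonneg _ _)
  refine h1.trans (le_of_eq ?_)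
  rw [← Finset.prod_mul_distrib]
  refine Finset.prod_congr rfl fun i _ => ?_
  rw [bnd1, show Real.exp (-(c * l i ^ 2)) * phi β (s - l i) * Real.exp ((n ^ 2 * β) * |l i|)
      = phi β (s - l i) * (Real.exp (-(c * l i ^ 2)) * Real.exp ((n ^ 2 * β) * |l i|)) from by
        ring, ← Real.exp_add]

lemma integrable_FF (hβ : 0 < β) (hc : 0 < c) (s : ℝ) :
    Integrable (FF c β s (n := n)) := by
  have hb : Integrable fun l : Fin n → ℝ => ∏ i, bnd1 c (n ^ 2 * β) s β (l i) :=
    Integrable.fintype_prod fun _ => integrable_phi_gauss hc (by linarith) (by positivity) s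
  refine hb.mono' (FF_measurable hβ s).aestronglyMeasurable ?_
  filter_upwards with l
  rw [Real.norm_eq_abs, abs_of_nonneg (FF_nonneg hβ s l)]
  exact FF_le hβ s l

lemma abs_sum_inv_phi_le (hβ : 0 < β) (s : ℝ) (y : Fin n → ℝ) :
    |∑ i, β * (s - y i)⁻¹| * ∏ i, phi β (s - y i) ≤
      ∑ i, β * (phi (β - 1) (s - y i) * ∏ j ∈ Finset.univ.erase i, phi β (s - y j)) := by
  have hpn : (0:ℝ) ≤ ∏ i, phi β (s - y i) :=
    Finset.prod_nonneg fun i _ => phi_nonneg _ _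
  calc |∑ i, β * (s - y i)⁻¹| * ∏ i, phi β (s - y i)
      ≤ (∑ i, |β * (s - y i)⁻¹|) * ∏ i, phi β (s - y i) :=
        mul_le_mul_of_nonneg_right (Finset.abs_sum_le_sum_abs _ _) hpn
    _ = ∑ i, |β * (s - y i)⁻¹| * ∏ j, phi β (s - y j) := by rw [Finset.sum_mul]
    _ ≤ ∑ i, β * (phi (β - 1) (s - y i) * ∏ j ∈ Finset.univ.erase i, phi β (s - y j)) := by
        refine Finset.sum_le_sum fun i _ => ?_
        rw [abs_mul, abs_of_pos hβ,
          ← Finset.mul_prod_erase Finset.univ (fun j => phi β (s - y j)) (Finset.mem_univ i),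
          mul_assoc]
        refine mul_le_mul_of_nonneg_left ?_ hβ.le
        rw [← mul_assoc]
        exact mul_le_mul_of_nonneg_right (inv_phi_le hβ _)
          (Finset.prod_nonneg fun j _ => phi_nonneg _ _)

lemma GG_abs_le (hβ : 0 < β) (s : ℝ) (l : Fin n → ℝ) :
    |GG c β s l| ≤
      ∑ i, β * ∏ j, bnd1 c (n ^ 2 * β) s (if j = i then β - 1 else β) (l j) := by
  have hE : (0:ℝ) ≤ (∏ i, Real.exp (-(c * l i ^ 2))) :=
    Finset.prod_nonneg fun i _ => (Real.exp_pos _).le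
  have hsplit : FF c β s l =
      ((∏ i, phi β (s - l i)) * (∏ i, Real.exp (-(c * l i ^ 2)))) * vdm β l := by
    rw [FF, Finset.prod_mul_distrib]; ring
  have h1 : |GG c β s l| = (|∑ i, β * (s - l i)⁻¹| * ∏ i, phi β (s - l i)) *
      ((∏ i, Real.exp (-(c * l i ^ 2))) * vdm β l) := by
    rw [GG, abs_mul, abs_of_nonneg (FF_nonneg hβ s l), hsplit]; ring
  rw [h1]
  have h2 : (|∑ i, β * (s - l i)⁻¹| * ∏ i, phi β (s - l i)) *
      ((∏ i, Real.exp (-(c * l i ^ 2))) * vdm β l) ≤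
      (∑ i, β * (phi (β - 1) (s - l i) * ∏ j ∈ Finset.univ.erase i, phi β (s - l j))) *
      ((∏ i, Real.exp (-(c * l i ^ 2))) * ∏ i, Real.exp ((n ^ 2 * β) * |l i|)) := by
    refine mul_le_mul (abs_sum_inv_phi_le hβ s l) ?_ ?_ ?_
    · exact mul_le_mul_of_nonneg_left (vdm_le hβ l) hE
    · exact mul_nonneg hE (vdm_nonneg β l)
    · exact Finset.sum_nonneg fun i _ => mul_nonneg hβ.le (mul_nonneg (phi_nonneg _ _)
        (Finset.prod_nonneg fun j _ => phi_nonneg _ _))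
  refine h2.trans (le_of_eq ?_)
  rw [Finset.sum_mul]
  refine Finset.sum_congr rfl fun i _ => ?_
  have hprod : ∏ j, bnd1 c (n ^ 2 * β) s (if j = i then β - 1 else β) (l j)
      = (phi (β - 1) (s - l i) * ∏ j ∈ Finset.univ.erase i, phi β (s - l j)) *
        ∏ j, Real.exp (-(c * l j ^ 2) + (n ^ 2 * β) * |l j|) := by
    have : ∀ j, bnd1 c (n ^ 2 * β) s (if j = i then β - 1 else β) (l j)
        = phi (if j = i then β - 1 else β) (s - l j) *
          Real.exp (-(c * l j ^ 2) + (n ^ 2 * β) * |l j|) := fun j => rfl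
    simp_rw [this]
    rw [Finset.prod_mul_distrib]
    congr 1
    rw [← Finset.mul_prod_erase Finset.univ _ (Finset.mem_univ i), if_pos rfl]
    congr 1
    exact Finset.prod_congr rfl fun j hj => by
      rw [if_neg (Finset.mem_erase.mp hj).1]
  rw [hprod, ← Finset.prod_mul_distrib]
  have : ∀ j, Real.exp (-(c * l j ^ 2)) * Real.exp ((n ^ 2 * β) * |l j|)
      = Real.exp (-(c * l j ^ 2) + (n ^ 2 * β) * |l j|) := fun j => (Real.exp_add _ _).symm
  simp_rw [this]
  ring

lemma integrable_GG (hβ : 0 < β) (hc : 0 < c) (s : ℝ) :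
    Integrable (GG c β s (n := n)) := by
  have hterm : ∀ i : Fin n, Integrable (fun l : Fin n → ℝ =>
      β * ∏ j, bnd1 c (n ^ 2 * β) s (if j = i then β - 1 else β) (l j)) := by
    intro i
    refine (Integrable.fintype_prod fun j => integrable_phi_gauss hc ?_ (by positivity) s).const_mul β
    split_ifs <;> linarith
  refine (integrable_finset_sum Finset.univ fun i _ => hterm i).mono'
    (GG_measurable hβ s).aestronglyMeasurable ?_
  filter_upwards with l
  rw [Real.norm_eq_abs]
  exact GG_abs_le hβ s l

lemma FF_eq (s : ℝ) (l : Fin n → ℝ) :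
    FF c β s l = ((∏ i, Real.exp (-(c * l i ^ 2))) * vdm β l) * ∏ i, phi β (s - l i) := by
  rw [FF, Finset.prod_mul_distrib]; ring

lemma GG_eq (s : ℝ) (l : Fin n → ℝ) :
    GG c β s l = ((∏ i, Real.exp (-(c * l i ^ 2))) * vdm β l) *
      ((∑ i, β * (s - l i)⁻¹) * ∏ i, phi β (s - l i)) := by
  rw [GG, FF_eq]; ring

lemma intervalIntegrable_g (hβ : 0 < β) (l : Fin n → ℝ) (a₀ a₁ : ℝ) :
    IntervalIntegrable (fun s => (∑ i, β * (s - l i)⁻¹) * ∏ i, phi β (s - l i))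
      volume a₀ a₁ := by
  set u := max a₀ a₁ with hu
  have hbnd : IntervalIntegrable (fun s => ∑ i, β *
      ((∏ j ∈ Finset.univ.erase i, phi β (u - l j)) * phi (β - 1) (s - l i)))
      volume a₀ a₁ := by
    have H := IntervalIntegrable.sum (μ := volume) (a := a₀) (b := a₁)
      (f := fun i s => β * ((∏ j ∈ Finset.univ.erase i, phi β (u - l j)) *
        phi (β - 1) (s - l i)))
      Finset.univ (fun i _ =>
        ((intervalIntegrable_phi_comp (show (-1:ℝ) < β - 1 by linarith) (l i) a₀ a₁).const_mul
          ((∏ j ∈ Finset.univ.erase i, phi β (u - l j)))).const_mul β)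
    have he : (∑ i : Fin n, fun s => β * ((∏ j ∈ Finset.univ.erase i, phi β (u - l j)) *
        phi (β - 1) (s - l i))) = fun s => ∑ i : Fin n, β *
        ((∏ j ∈ Finset.univ.erase i, phi β (u - l j)) * phi (β - 1) (s - l i)) := by
      funext s; simp [Finset.sum_apply]
    rwa [he] at H
  refine hbnd.mono_fun' ?_ ?_
  · refine Measurable.aestronglyMeasurable ?_
    refine Measurable.mul (Finset.measurable_sum _ fun i _ =>
      ((measurable_id.sub measurable_const).inv.const_mul β)) ?_
    exact Finset.measurable_prod _ fun i _ =>
      (phi_measurable β).comp (measurable_id.sub measurable_const)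
  · rw [EventuallyLE, ae_restrict_iff' measurableSet_uIoc]
    filter_upwards with x hx
    have hxu : x ≤ u := by
      rcases Set.mem_uIoc.mp hx with ⟨_, h2⟩ | ⟨_, h2⟩
      · exact h2.trans (le_max_right _ _)
      · exact h2.trans (le_max_left _ _)
    have h1 : ‖(∑ i, β * (x - l i)⁻¹) * ∏ i, phi β (x - l i)‖
        = |∑ i, β * (x - l i)⁻¹| * ∏ i, phi β (x - l i) := by
      rw [Real.norm_eq_abs, abs_mul,
        abs_of_nonneg (Finset.prod_nonneg fun i _ => phi_nonneg _ _)]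
    rw [h1]
    refine (abs_sum_inv_phi_le hβ x l).trans (Finset.sum_le_sum fun i _ => ?_)
    rw [show β * (phi (β - 1) (x - l i) * ∏ j ∈ Finset.univ.erase i, phi β (x - l j))
        = β * ((∏ j ∈ Finset.univ.erase i, phi β (x - l j)) * phi (β - 1) (x - l i)) from by
          ring]
    refine mul_le_mul_of_nonneg_left (mul_le_mul_of_nonneg_right ?_ (phi_nonneg _ _)) hβ.le
    exact Finset.prod_le_prod (fun j _ => phi_nonneg _ _)
      (fun j _ => phi_mono hβ (by linarith))

lemma intervalIntegrable_GG_s (hβ : 0 < β) (l : Fin n → ℝ) (a₀ a₁ : ℝ) :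
    IntervalIntegrable (fun s => GG c β s l) volume a₀ a₁ := by
  have h1 : (fun s => GG c β s l) = fun s =>
      ((∏ i, Real.exp (-(c * l i ^ 2))) * vdm β l) *
        ((∑ i, β * (s - l i)⁻¹) * ∏ i, phi β (s - l i)) := funext fun s => GG_eq s l
  rw [h1]
  exact (intervalIntegrable_g hβ l a₀ a₁).const_mul _

lemma ftc_g (hβ : 0 < β) [Nonempty (Fin n)] (l : Fin n → ℝ) {a₀ a₁ : ℝ} (h : a₀ ≤ a₁) :
    ∫ s in a₀..a₁, (∑ i, β * (s - l i)⁻¹) * ∏ i, phi β (s - l i)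
      = (∏ i, phi β (a₁ - l i)) - ∏ i, phi β (a₀ - l i) := by
  obtain ⟨i₀, -, hi₀⟩ := Finset.exists_mem_eq_sup' (Finset.univ_nonempty (α := Fin n)) l
  generalize hMdef : Finset.univ.sup' Finset.univ_nonempty l = M at hi₀
  have hle : ∀ i, l i ≤ M := fun i => hMdef ▸ Finset.le_sup' l (Finset.mem_univ i)
  have hm0 : ∀ s, s ≤ M → (∏ i, phi β (s - l i)) = 0 := fun s hs =>
    Finset.prod_eq_zero (Finset.mem_univ i₀) (phi_eq_zero hβ (by
      have := hi₀; linarith))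
  have hg0 : ∀ s, s ≤ M → (∑ i, β * (s - l i)⁻¹) * ∏ i, phi β (s - l i) = 0 :=
    fun s hs => by rw [hm0 s hs, mul_zero]
  have hmc : Continuous fun s : ℝ => ∏ i, phi β (s - l i) :=
    continuous_finset_prod _ fun i _ =>
      (phi_continuous hβ).comp (continuous_id.sub continuous_const)
  have hderiv : ∀ s, M < s → HasDerivAt (fun u => ∏ i, phi β (u - l i))
      ((∑ i, β * (s - l i)⁻¹) * ∏ i, phi β (s - l i)) s := by
    intro s hs
    have hpos : ∀ i, 0 < s - l i := fun i => by linarith [hle i]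
    have hev : (fun u => ∏ i, phi β (u - l i)) =ᶠ[nhds s] fun u => ∏ i, (u - l i) ^ β := by
      filter_upwards [IsOpen.mem_nhds isOpen_Ioi hs] with u hu
      have hu' : M < u := hu
      exact Finset.prod_congr rfl fun i _ => phi_eq_rpow (by linarith [hle i])
    have hD : HasDerivAt (fun u => ∏ i, (u - l i) ^ β)
        (∑ i, (∏ j ∈ Finset.univ.erase i, (s - l j) ^ β) •
          (1 * β * (s - l i) ^ (β - 1))) s :=
      HasDerivAt.fun_finsetProd fun i _ =>
        ((hasDerivAt_id s).sub_const (l i)).rpow_const (Or.inl (hpos i).ne')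
    have heq : (∑ i, (∏ j ∈ Finset.univ.erase i, (s - l j) ^ β) •
        (1 * β * (s - l i) ^ (β - 1)))
        = (∑ i, β * (s - l i)⁻¹) * ∏ i, phi β (s - l i) := by
      rw [Finset.sum_mul]
      refine Finset.sum_congr rfl fun i _ => ?_
      rw [smul_eq_mul,
        ← Finset.mul_prod_erase Finset.univ (fun j => phi β (s - l j)) (Finset.mem_univ i),
        phi_eq_rpow (hpos i).le, Real.rpow_sub_one (hpos i).ne' β,
        show (∏ j ∈ Finset.univ.erase i, phi β (s - l j))
          = ∏ j ∈ Finset.univ.erase i, (s - l j) ^ β from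
          Finset.prod_congr rfl fun j _ => phi_eq_rpow (hpos j).le]
      field_simp
    rw [← heq]
    exact hD.congr_of_eventuallyEq hev
  have main : ∀ b, M ≤ b → (∫ s in M..b, (∑ i, β * (s - l i)⁻¹) * ∏ i, phi β (s - l i))
      = ∏ i, phi β (b - l i) := by
    intro b hb
    have hcalc := intervalIntegral.integral_eq_sub_of_hasDeriv_right_of_le hb
      hmc.continuousOn (fun x hx => (hderiv x hx.1).hasDerivWithinAt)
      (intervalIntegrable_g hβ l M b)
    rw [hcalc, hm0 M le_rfl, sub_zero]
  have hzero : ∀ b₀ b₁ : ℝ, b₀ ≤ b₁ → b₁ ≤ M →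
      (∫ s in b₀..b₁, (∑ i, β * (s - l i)⁻¹) * ∏ i, phi β (s - l i)) = 0 := by
    intro b₀ b₁ hb hb₁
    have he : EqOn (fun s => (∑ i, β * (s - l i)⁻¹) * ∏ i, phi β (s - l i))
        (fun _ => (0:ℝ)) (uIcc b₀ b₁) := by
      intro s hs
      rw [uIcc_of_le hb] at hs
      exact hg0 s (hs.2.trans hb₁)
    rw [intervalIntegral.integral_congr he]
    simp
  rcases le_or_gt a₁ M with hM1 | hM1
  · rw [hzero a₀ a₁ h hM1, hm0 a₁ hM1, hm0 a₀ (h.trans hM1), sub_self]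
  · rcases le_or_gt a₀ M with hM2 | hM2
    · rw [← intervalIntegral.integral_add_adjacent_intervals
          (intervalIntegrable_g hβ l a₀ M) (intervalIntegrable_g hβ l M a₁),
        hzero a₀ M hM2 le_rfl, main a₁ hM1.le, hm0 a₀ hM2, sub_zero, zero_add]
    · rw [← intervalIntegral.integral_interval_sub_left
          (intervalIntegrable_g hβ l M a₁) (intervalIntegrable_g hβ l M a₀),
        main a₁ hM1.le, main a₀ hM2.le]

lemma key_lambda (hβ : 0 < β) [Nonempty (Fin n)] (l : Fin n → ℝ) {a₀ a₁ : ℝ} (h : a₀ ≤ a₁) :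
    ∫ s in a₀..a₁, GG c β s l = FF c β a₁ l - FF c β a₀ l := by
  have h1 : (fun s => GG c β s l) = fun s =>
      ((∏ i, Real.exp (-(c * l i ^ 2))) * vdm β l) *
        ((∑ i, β * (s - l i)⁻¹) * ∏ i, phi β (s - l i)) := funext fun s => GG_eq s l
  rw [h1, intervalIntegral.integral_const_mul, ftc_g hβ l h, FF_eq, FF_eq]
  ring

noncomputable def Gs (c β s : ℝ) {n : ℕ} (μ : Fin n → ℝ) : ℝ :=
  (∑ i, β * (0 - μ i)⁻¹) *
    ((∏ i, Real.exp (-(c * (μ i + s) ^ 2)) * phi β (0 - μ i)) * vdm β μ)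

lemma vdm_shift (β : ℝ) (μ : Fin n → ℝ) (s : ℝ) : vdm β (fun i => μ i + s) = vdm β μ := by
  rw [vdm, vdm]
  refine Finset.prod_congr rfl fun i _ => Finset.prod_congr rfl fun j _ => ?_
  rw [show μ i + s - (μ j + s) = μ i - μ j from by ring]

lemma Gs_eq (s : ℝ) (μ : Fin n → ℝ) : GG c β s (fun i => μ i + s) = Gs c β s μ := by
  rw [GG, FF, Gs, vdm_shift]
  have h : ∀ i, s - (μ i + s) = 0 - μ i := fun i => by ring
  simp_rw [h]

lemma Gs_measurable (hβ : 0 < β) (s : ℝ) : Measurable (Gs c β s (n := n)) := by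
  refine Measurable.mul (Finset.measurable_sum _ fun i _ =>
    (by fun_prop)) ?_
  refine Measurable.mul (Finset.measurable_prod _ fun i _ => ?_) (vdm_continuous hβ).measurable
  exact (Real.continuous_exp.measurable.comp (by fun_prop)).mul
    ((phi_measurable β).comp (measurable_const.sub (measurable_pi_apply i)))

lemma shift_integral (s : ℝ) :
    (∫ l : Fin n → ℝ, GG c β s l) = ∫ μ : Fin n → ℝ, Gs c β s μ := by
  have h := integral_add_right_eq_self (μ := (volume : Measure (Fin n → ℝ)))
    (GG c β s) (fun _ => s)
  rw [← h]
  congr 1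
  funext μ
  rw [show (μ + fun _ => s) = (fun i => μ i + s) from rfl, Gs_eq]

lemma Gs_abs_le (hβ : 0 < β) (hc : 0 < c) (s₀ : ℝ) {s : ℝ} (hs : |s - s₀| < 1)
    (μ : Fin n → ℝ) :
    |Gs c β s μ| ≤ Real.exp (n * (c * (|s₀| + 1) ^ 2)) *
      ∑ i, β * ∏ j, bnd1 (c / 2) (n ^ 2 * β) 0 (if j = i then β - 1 else β) (μ j) := by
  have hexp : ∀ i, Real.exp (-(c * (μ i + s) ^ 2)) ≤
      Real.exp (c * (|s₀| + 1) ^ 2) * Real.exp (-(c / 2 * μ i ^ 2)) := by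
    intro i
    rw [← Real.exp_add]
    apply Real.exp_le_exp.mpr
    have h1 : |s| ≤ |s₀| + 1 := by
      have := abs_sub_abs_le_abs_sub s s₀
      linarith
    have h2 : s ^ 2 ≤ (|s₀| + 1) ^ 2 := by
      have h3 : (0:ℝ) ≤ |s| := abs_nonneg s
      nlinarith [sq_abs s]
    nlinarith [sq_nonneg (μ i + 2 * s), sq_nonneg (μ i + s), hc]
  have hpn : (0:ℝ) ≤ ∏ i, phi β (0 - μ i) := Finset.prod_nonneg fun i _ => phi_nonneg _ _
  have hFnn : (0:ℝ) ≤ (∏ i, Real.exp (-(c * (μ i + s) ^ 2)) * phi β (0 - μ i)) * vdm β μ :=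
    mul_nonneg (Finset.prod_nonneg fun i _ =>
      mul_nonneg (Real.exp_pos _).le (phi_nonneg _ _)) (vdm_nonneg β μ)
  have h1 : |Gs c β s μ| = (|∑ i, β * (0 - μ i)⁻¹| * ∏ i, phi β (0 - μ i)) *
      ((∏ i, Real.exp (-(c * (μ i + s) ^ 2))) * vdm β μ) := by
    rw [Gs, abs_mul, abs_of_nonneg hFnn, Finset.prod_mul_distrib]
    ring
  rw [h1]
  have h2 : (∏ i, Real.exp (-(c * (μ i + s) ^ 2))) * vdm β μ ≤
      (∏ i, Real.exp (c * (|s₀| + 1) ^ 2) * Real.exp (-(c / 2 * μ i ^ 2))) *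
        ∏ i, Real.exp ((n ^ 2 * β) * |μ i|) := by
    refine mul_le_mul (Finset.prod_le_prod (fun i _ => (Real.exp_pos _).le)
      (fun i _ => hexp i)) (vdm_le hβ μ) (vdm_nonneg β μ)
      (Finset.prod_nonneg fun i _ => mul_nonneg (Real.exp_pos _).le (Real.exp_pos _).le)
  have h3 : (|∑ i, β * (0 - μ i)⁻¹| * ∏ i, phi β (0 - μ i)) *
      ((∏ i, Real.exp (-(c * (μ i + s) ^ 2))) * vdm β μ) ≤
      (∑ i, β * (phi (β - 1) (0 - μ i) * ∏ j ∈ Finset.univ.erase i, phi β (0 - μ j))) *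
      ((∏ i, Real.exp (c * (|s₀| + 1) ^ 2) * Real.exp (-(c / 2 * μ i ^ 2))) *
        ∏ i, Real.exp ((n ^ 2 * β) * |μ i|)) := by
    refine mul_le_mul (abs_sum_inv_phi_le hβ 0 μ) h2 ?_ ?_
    · exact mul_nonneg (Finset.prod_nonneg fun i _ => (Real.exp_pos _).le) (vdm_nonneg β μ)
    · exact Finset.sum_nonneg fun i _ => mul_nonneg hβ.le (mul_nonneg (phi_nonneg _ _)
        (Finset.prod_nonneg fun j _ => phi_nonneg _ _))
  refine h3.trans (le_of_eq ?_)
  rw [Finset.prod_mul_distrib, Finset.prod_const, Finset.mul_sum, Finset.sum_mul]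
  refine Finset.sum_congr rfl fun i _ => ?_
  have hprod : ∏ j, bnd1 (c / 2) (n ^ 2 * β) 0 (if j = i then β - 1 else β) (μ j)
      = (phi (β - 1) (0 - μ i) * ∏ j ∈ Finset.univ.erase i, phi β (0 - μ j)) *
        ∏ j, Real.exp (-(c / 2 * μ j ^ 2) + (n ^ 2 * β) * |μ j|) := by
    have hb : ∀ j, bnd1 (c / 2) (n ^ 2 * β) 0 (if j = i then β - 1 else β) (μ j)
        = phi (if j = i then β - 1 else β) (0 - μ j) *
          Real.exp (-(c / 2 * μ j ^ 2) + (n ^ 2 * β) * |μ j|) := fun j => rfl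
    simp_rw [hb]
    rw [Finset.prod_mul_distrib]
    congr 1
    rw [← Finset.mul_prod_erase Finset.univ _ (Finset.mem_univ i), if_pos rfl]
    congr 1
    exact Finset.prod_congr rfl fun j hj => by rw [if_neg (Finset.mem_erase.mp hj).1]
  rw [hprod]
  simp_rw [Real.exp_add]
  rw [Finset.prod_mul_distrib, Real.exp_nat_mul, Finset.card_univ, Fintype.card_fin]
  ring

lemma integrable_bnd_sum (hβ : 0 < β) {c' : ℝ} (hc' : 0 < c') (s : ℝ) :
    Integrable (fun y : Fin n → ℝ =>
      ∑ i, β * ∏ j, bnd1 c' (n ^ 2 * β) s (if j = i then β - 1 else β) (y j)) := by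
  refine integrable_finset_sum Finset.univ fun i _ => ?_
  exact (Integrable.fintype_prod fun j => integrable_phi_gauss hc'
    (by split_ifs <;> linarith) (by positivity) s).const_mul β

lemma cont_D (hβ : 0 < β) (hc : 0 < c) :
    Continuous fun s => ∫ l : Fin n → ℝ, GG c β s l := by
  rw [continuous_iff_continuousAt]
  intro s₀
  have hrw : (fun s => ∫ l : Fin n → ℝ, GG c β s l)
      = fun s => ∫ μ : Fin n → ℝ, Gs c β s μ := funext fun s => shift_integral s
  rw [hrw]
  refine continuousAt_of_dominated ?_ ?_
    ((integrable_bnd_sum hβ (half_pos hc) 0).const_mul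
      (Real.exp (n * (c * (|s₀| + 1) ^ 2)))) ?_
  · filter_upwards with s
    exact (Gs_measurable hβ s).aestronglyMeasurable
  · filter_upwards [Metric.ball_mem_nhds s₀ one_pos] with s hs
    refine ae_of_all _ fun μ => ?_
    rw [Real.norm_eq_abs]
    exact Gs_abs_le hβ hc s₀ (by rw [Metric.mem_ball, Real.dist_eq] at hs; exact hs) μ
  · refine ae_of_all _ fun μ => ?_
    apply Continuous.continuousAt
    unfold Gs
    refine continuous_const.mul (Continuous.mul ?_ continuous_const)
    refine continuous_finset_prod _ fun i _ => Continuous.mul ?_ continuous_const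
    exact Real.continuous_exp.comp (by fun_prop)

lemma GG_joint_measurable (hβ : 0 < β) :
    Measurable fun p : ℝ × (Fin n → ℝ) => GG c β p.1 p.2 := by
  have hsnd : ∀ i, Measurable fun p : ℝ × (Fin n → ℝ) => p.2 i := fun i =>
    (measurable_pi_apply i).comp measurable_snd
  have hfst : Measurable fun p : ℝ × (Fin n → ℝ) => p.1 := measurable_fst
  have h1 : Measurable fun p : ℝ × (Fin n → ℝ) => ∑ i, β * (p.1 - p.2 i)⁻¹ :=
    Finset.measurable_sum _ fun i _ => ((hfst.sub (hsnd i)).inv.const_mul β)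
  have h2 : Measurable fun p : ℝ × (Fin n → ℝ) => FF c β p.1 p.2 := by
    refine Measurable.mul (Finset.measurable_prod _ fun i _ => Measurable.mul ?_ ?_)
      ((vdm_continuous hβ).measurable.comp measurable_snd)
    · exact Real.continuous_exp.measurable.comp (by fun_prop)
    · exact (phi_measurable β).comp (hfst.sub (hsnd i))
  exact h1.mul h2

lemma Zdiff (hβ : 0 < β) (hc : 0 < c) [Nonempty (Fin n)] {a₀ a₁ : ℝ} (h : a₀ ≤ a₁) :
    (∫ l : Fin n → ℝ, FF c β a₁ l) - (∫ l : Fin n → ℝ, FF c β a₀ l)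
      = ∫ s in Set.Ioc a₀ a₁, ∫ l : Fin n → ℝ, GG c β s l := by
  set D := fun s => ∫ l : Fin n → ℝ, GG c β s l with hD
  have hDc : Continuous D := cont_D hβ hc
  have hDnn : ∀ s, 0 ≤ D s := fun s => integral_nonneg fun l => GG_nonneg hβ s l
  have hGmeas : AEMeasurable (fun p : ℝ × (Fin n → ℝ) => ENNReal.ofReal (GG c β p.1 p.2))
      ((volume.restrict (Set.Ioc a₀ a₁)).prod volume) :=
    ((GG_joint_measurable hβ).ennreal_ofReal).aemeasurable
  have hA : ∀ l : Fin n → ℝ, (∫⁻ s in Set.Ioc a₀ a₁, ENNReal.ofReal (GG c β s l))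
      = ENNReal.ofReal (FF c β a₁ l - FF c β a₀ l) := by
    intro l
    have hint : IntegrableOn (fun s => GG c β s l) (Set.Ioc a₀ a₁) :=
      (intervalIntegrable_iff_integrableOn_Ioc_of_le h).mp (intervalIntegrable_GG_s hβ l a₀ a₁)
    rw [← ofReal_integral_eq_lintegral_ofReal hint
      (ae_of_all _ fun s => GG_nonneg hβ s l)]
    rw [← intervalIntegral.integral_of_le h, key_lambda hβ l h]
  have hC : ∀ s : ℝ, (∫⁻ l : Fin n → ℝ, ENNReal.ofReal (GG c β s l))
      = ENNReal.ofReal (D s) := by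
    intro s
    rw [hD, ← ofReal_integral_eq_lintegral_ofReal (integrable_GG hβ hc s)
      (ae_of_all _ fun l => GG_nonneg hβ s l)]
  have hswap := lintegral_lintegral_swap (μ := volume.restrict (Set.Ioc a₀ a₁))
    (ν := (volume : Measure (Fin n → ℝ)))
    (f := fun s l => ENNReal.ofReal (GG c β s l)) hGmeas
  have hkey : ENNReal.ofReal ((∫ l : Fin n → ℝ, FF c β a₁ l)
      - ∫ l : Fin n → ℝ, FF c β a₀ l)
      = ∫⁻ s in Set.Ioc a₀ a₁, ENNReal.ofReal (D s) := by
    rw [← integral_sub (integrable_FF hβ hc a₁) (integrable_FF hβ hc a₀)]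
    have h5 := ofReal_integral_eq_lintegral_ofReal
      (f := fun l : Fin n → ℝ => FF c β a₁ l - FF c β a₀ l)
      ((integrable_FF hβ hc a₁).sub (integrable_FF hβ hc a₀))
      (ae_of_all _ fun l => sub_nonneg.mpr (FF_mono hβ h l))
    rw [h5]
    calc (∫⁻ l : Fin n → ℝ, ENNReal.ofReal (FF c β a₁ l - FF c β a₀ l))
        = ∫⁻ l : Fin n → ℝ, ∫⁻ s in Set.Ioc a₀ a₁, ENNReal.ofReal (GG c β s l) := by
          simp_rw [hA]
      _ = ∫⁻ s in Set.Ioc a₀ a₁, ∫⁻ l : Fin n → ℝ, ENNReal.ofReal (GG c β s l) :=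
          hswap.symm
      _ = ∫⁻ s in Set.Ioc a₀ a₁, ENNReal.ofReal (D s) := by simp_rw [hC]
  have hdiffnn : (0:ℝ) ≤ (∫ l : Fin n → ℝ, FF c β a₁ l) - ∫ l : Fin n → ℝ, FF c β a₀ l :=
    sub_nonneg.mpr (integral_mono (integrable_FF hβ hc a₀) (integrable_FF hβ hc a₁)
      (fun l => FF_mono hβ h l))
  rw [integral_eq_lintegral_of_nonneg_ae (ae_of_all _ fun s => hDnn s)
    (hDc.aestronglyMeasurable.restrict), ← hkey, ENNReal.toReal_ofReal hdiffnn]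

lemma hasDerivAt_Z (hβ : 0 < β) (hc : 0 < c) [Nonempty (Fin n)] (a : ℝ) :
    HasDerivAt (fun s => ∫ l : Fin n → ℝ, FF c β s l)
      (∫ l : Fin n → ℝ, GG c β a l) a := by
  set D := fun s => ∫ l : Fin n → ℝ, GG c β s l with hD
  have hDc : Continuous D := cont_D hβ hc
  have hrep : ∀ x : ℝ, (∫ l : Fin n → ℝ, FF c β x l)
      = (∫ l : Fin n → ℝ, FF c β a l) + ∫ s in a..x, D s := by
    intro x
    rcases le_total a x with hx | hx
    · rw [intervalIntegral.integral_of_le hx]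
      linarith [Zdiff (n := n) hβ hc hx]
    · rw [intervalIntegral.integral_symm, intervalIntegral.integral_of_le hx]
      linarith [Zdiff (n := n) hβ hc hx]
  have hder : HasDerivAt (fun x => (∫ l : Fin n → ℝ, FF c β a l) + ∫ s in a..x, D s)
      (D a) a := by
    refine HasDerivAt.const_add _ ?_
    exact intervalIntegral.integral_hasDerivAt_right (hDc.intervalIntegrable a a)
      ⟨Set.univ, univ_mem, hDc.aestronglyMeasurable.restrict⟩ hDc.continuousAt
  have hfe : (fun s => ∫ l : Fin n → ℝ, FF c β s l)
      = fun x => (∫ l : Fin n → ℝ, FF c β a l) + ∫ s in a..x, D s := funext hrep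
  rw [hfe]
  exact hder

lemma one_le_prod_real {ι : Type*} {s : Finset ι} {f : ι → ℝ} (h : ∀ i ∈ s, 1 ≤ f i) :
    1 ≤ ∏ i ∈ s, f i := by
  calc (1:ℝ) = ∏ _i ∈ s, 1 := by simp
    _ ≤ ∏ i ∈ s, f i := Finset.prod_le_prod (fun _ _ => zero_le_one) h

lemma Z_pos (hβ : 0 < β) (hc : 0 < c) [Nonempty (Fin n)] (a : ℝ) :
    0 < ∫ l : Fin n → ℝ, FF c β a l := by
  set R := |a| + 2 * (n:ℝ) + 2 with hR
  set ε := Real.exp (-(c * R ^ 2)) ^ n with hε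
  set U := Set.univ.pi fun i : Fin n =>
    Set.Ioo (a - 2 * (i:ℝ) - 2) (a - 2 * (i:ℝ) - 1) with hU
  have hUm : MeasurableSet U := MeasurableSet.univ_pi fun i => measurableSet_Ioo
  have hUvol : volume U = 1 := by
    rw [hU, volume_pi_pi]
    have hv : ∀ i : Fin n, volume (Set.Ioo (a - 2*(i:ℝ) - 2) (a - 2*(i:ℝ) - 1)) = 1 := by
      intro i; rw [Real.volume_Ioo]
      norm_num
    simp [hv]
  have hlow : ∀ l ∈ U, ε ≤ FF c β a l := by
    intro l hl
    have hmem : ∀ i : Fin n, a - 2*(i:ℝ) - 2 < l i ∧ l i < a - 2*(i:ℝ) - 1 :=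
      fun i => Set.mem_univ_pi.mp hl i
    have hin : ∀ i : Fin n, (0:ℝ) ≤ (i:ℝ) ∧ (i:ℝ) < n := fun i =>
      ⟨Nat.cast_nonneg _, by exact_mod_cast i.isLt⟩
    have hb : ∀ i, -R ≤ l i ∧ l i ≤ R := by
      intro i
      constructor
      · have := (hmem i).1
        have := (hin i).2
        have := neg_abs_le a
        rw [hR]; linarith
      · have := (hmem i).2
        have := (hin i).1
        have := le_abs_self a
        rw [hR]; linarith
    have hexp : ∀ i, Real.exp (-(c * R ^ 2)) ≤ Real.exp (-(c * l i ^ 2)) := by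
      intro i
      apply Real.exp_le_exp.mpr
      have hsq : l i ^ 2 ≤ R ^ 2 := sq_le_sq' (hb i).1 (hb i).2
      nlinarith [hc.le]
    have hphi1 : ∀ i, 1 ≤ phi β (a - l i) := by
      intro i
      apply one_le_phi hβ
      have := (hmem i).2
      have := (hin i).1
      linarith
    have hvdm : 1 ≤ vdm β l := by
      refine one_le_prod_real fun i _ => one_le_prod_real fun j hj => ?_
      refine Real.one_le_rpow ?_ hβ.le
      have hij : i < j := Finset.mem_Ioi.mp hj
      have hcast : (i:ℝ) + 1 ≤ (j:ℝ) := by exact_mod_cast hij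
      have h1 := (hmem i).1
      have h2 := (hmem j).2
      rw [le_abs]
      left
      linarith
    calc ε = ∏ _i : Fin n, Real.exp (-(c * R ^ 2)) := by
          rw [hε, Finset.prod_const, Finset.card_univ, Fintype.card_fin]
      _ ≤ ∏ i, Real.exp (-(c * l i ^ 2)) * phi β (a - l i) := by
          refine Finset.prod_le_prod (fun i _ => (Real.exp_pos _).le) fun i _ => ?_
          calc Real.exp (-(c * R ^ 2)) ≤ Real.exp (-(c * l i ^ 2)) := hexp i
            _ ≤ Real.exp (-(c * l i ^ 2)) * phi β (a - l i) :=
                le_mul_of_one_le_right (Real.exp_pos _).le (hphi1 i)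
      _ ≤ FF c β a l :=
          le_mul_of_one_le_right (Finset.prod_nonneg fun i _ =>
            mul_nonneg (Real.exp_pos _).le (phi_nonneg _ _)) hvdm
  have h1 : ε * (volume U).toReal ≤ ∫ l in U, FF c β a l :=
    setIntegral_ge_of_const_le_real hUm (by rw [hUvol]; exact ENNReal.one_ne_top) hlow
      ((integrable_FF hβ hc a).integrableOn)
  have h2 : (∫ l in U, FF c β a l) ≤ ∫ l : Fin n → ℝ, FF c β a l :=
    setIntegral_le_integral (integrable_FF hβ hc a)
      (ae_of_all _ fun l => FF_nonneg hβ a l)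
  have hε0 : 0 < ε := pow_pos (Real.exp_pos _) n
  have h3 : ε * (volume U).toReal = ε := by rw [hUvol]; simp
  linarith [h1, h2, h3.symm.le, hε0]

end WallAux

/-- `a ↦ ln Z(a)` is differentiable on ℝ with
`(ln Z)'(a) = β · E_a[Σᵢ 1/(a - λᵢ)]`. -/
theorem log_wallZ_hasDerivAt (N : ℕ) (hN : 2 ≤ N) (β t : ℝ) (hβ : 0 < β) (ht : 0 < t)
    (a : ℝ) :
    HasDerivAt (fun a' : ℝ => Real.log (wallZ N β t a'))
      (β * ∫ l, (∑ i, (a - l i)⁻¹) ∂wallMeasure N β t a) a := by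
  classical
  haveI : Nonempty (Fin (N - 1)) := ⟨⟨0, by omega⟩⟩
  have hN0 : (0:ℝ) < (N:ℝ) := by exact_mod_cast (by omega : 0 < N)
  set c := (N:ℝ) * β / (4 * t) with hcdef
  have hc : 0 < c := div_pos (mul_pos hN0 hβ) (by linarith)
  -- the constraint set
  have hset : ∀ a' : ℝ, MeasurableSet {l : Fin (N-1) → ℝ | ∀ i, l i ≤ a'} := by
    intro a'
    have he : {l : Fin (N-1) → ℝ | ∀ i, l i ≤ a'}
        = ⋂ i, (fun l : Fin (N-1) → ℝ => l i) ⁻¹' Iic a' := by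
      ext l; simp [Set.mem_iInter]
    rw [he]
    exact MeasurableSet.iInter fun i => (measurable_pi_apply i) measurableSet_Iic
  -- indicator identity
  have hind : ∀ a' : ℝ, ∀ l : Fin (N-1) → ℝ,
      Set.indicator {l : Fin (N-1) → ℝ | ∀ i, l i ≤ a'} (wallWeight N β t a') l
        = WallAux.FF c β a' l := by
    intro a' l
    by_cases hmem : l ∈ {l : Fin (N-1) → ℝ | ∀ i, l i ≤ a'}
    · rw [Set.indicator_of_mem hmem, wallWeight, WallAux.FF]
      congr 1
      refine Finset.prod_congr rfl fun i _ => ?_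
      have hmi : l i ≤ a' := hmem i
      rw [WallAux.phi_eq_rpow (by linarith : (0:ℝ) ≤ a' - l i)]
      have harg : -((N:ℝ) * β * l i ^ 2) / (4 * t) = -(c * l i ^ 2) := by
        rw [hcdef]; ring
      rw [harg]
    · rw [Set.indicator_of_notMem hmem]
      symm
      simp only [Set.mem_setOf_eq, not_forall, not_le] at hmem
      obtain ⟨i, hi⟩ := hmem
      rw [WallAux.FF, Finset.prod_eq_zero (Finset.mem_univ i), zero_mul]
      rw [WallAux.phi_eq_zero hβ (by linarith), mul_zero]
  have hZ : ∀ a', wallZ N β t a' = ∫ l : Fin (N-1) → ℝ, WallAux.FF c β a' l := by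
    intro a'
    rw [wallZ, ← integral_indicator (hset a')]
    congr 1
    funext l
    exact hind a' l
  have hd' : HasDerivAt (fun a' => wallZ N β t a')
      (∫ l : Fin (N-1) → ℝ, WallAux.GG c β a l) a := by
    rw [show (fun a' => wallZ N β t a')
        = fun a' => ∫ l : Fin (N-1) → ℝ, WallAux.FF c β a' l from funext hZ]
    exact WallAux.hasDerivAt_Z hβ hc a
  have hZpos : 0 < wallZ N β t a := by
    rw [hZ]
    exact WallAux.Z_pos hβ hc a
  have hlog := hd'.log hZpos.ne'
  -- identify the derivative value
  have hw : Measurable (wallWeight N β t a) := by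
    refine Measurable.mul (Finset.measurable_prod _ fun i _ => Measurable.mul ?_ ?_) ?_
    · exact Real.continuous_exp.measurable.comp (by fun_prop)
    · exact (WallAux.measurable_rpow_const β).comp
        (measurable_const.sub (measurable_pi_apply i))
    · exact Finset.measurable_prod _ fun i _ => Finset.measurable_prod _ fun j _ =>
        (WallAux.measurable_rpow_const β).comp
          ((measurable_pi_apply i).sub (measurable_pi_apply j)).abs
  set T := {l : Fin (N-1) → ℝ | ∀ i, l i ≤ a} with hT
  set Z := wallZ N β t a with hZdef
  set w := wallWeight N β t a with hwdef
  have hwnonneg : ∀ l ∈ T, 0 ≤ w l := by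
    intro l hl
    refine mul_nonneg (Finset.prod_nonneg fun i _ => mul_nonneg (Real.exp_pos _).le ?_)
      (Finset.prod_nonneg fun i _ => Finset.prod_nonneg fun j _ =>
        Real.rpow_nonneg (abs_nonneg _) _)
    exact Real.rpow_nonneg (by have := hl i; linarith) _
  have hwT : ∀ l, Set.indicator T w l = WallAux.FF c β a l := hind a
  have hmeas : wallMeasure N β t a = (volume.restrict T).withDensity
      fun l => ((Real.toNNReal (w l / Z) : NNReal) : ENNReal) := rfl
  have h1 : (∫ l, (∑ i, (a - l i)⁻¹) ∂wallMeasure N β t a)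
      = ∫ l in T, (Real.toNNReal (w l / Z)) • (∑ i, (a - l i)⁻¹) := by
    rw [hmeas]
    exact integral_withDensity_eq_integral_smul
      (measurable_real_toNNReal.comp (hw.div_const Z)) (fun l => ∑ i, (a - l i)⁻¹)
  have h2 : (∫ l in T, (Real.toNNReal (w l / Z)) • (∑ i, (a - l i)⁻¹))
      = ∫ l in T, ((∑ i, (a - l i)⁻¹) * w l) / Z := by
    refine setIntegral_congr_fun (hset a) fun l hl => ?_
    rw [NNReal.smul_def, smul_eq_mul,
      Real.coe_toNNReal _ (div_nonneg (hwnonneg l hl) hZpos.le)]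
    ring
  have h3 : (∫ l in T, ((∑ i, (a - l i)⁻¹) * w l) / Z)
      = (∫ l in T, (∑ i, (a - l i)⁻¹) * w l) / Z := integral_div Z _
  have h4 : (∫ l in T, (∑ i, (a - l i)⁻¹) * w l)
      = ∫ l : Fin (N-1) → ℝ, (∑ i, (a - l i)⁻¹) * WallAux.FF c β a l := by
    rw [← integral_indicator (hset a)]
    congr 1
    funext l
    by_cases hl : l ∈ T
    · rw [Set.indicator_of_mem hl, ← hwT l, Set.indicator_of_mem hl]
    · rw [Set.indicator_of_notMem hl, ← hwT l, Set.indicator_of_notMem hl, mul_zero]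
  have h5 : (∫ l : Fin (N-1) → ℝ, WallAux.GG c β a l)
      = β * ∫ l : Fin (N-1) → ℝ, (∑ i, (a - l i)⁻¹) * WallAux.FF c β a l := by
    rw [← integral_const_mul]
    congr 1
    funext l
    rw [WallAux.GG, ← Finset.mul_sum]
    ring
  have hval : β * (∫ l, (∑ i, (a - l i)⁻¹) ∂wallMeasure N β t a)
      = (∫ l : Fin (N-1) → ℝ, WallAux.GG c β a l) / Z := by
    rw [h1, h2, h3, h4, h5]
    ring
  rw [hval]
  exact hlog
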